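/- If a finite poset P has local dimension at most 2 (i.e., P has a local realizer 𝓛 with μ(u,𝓛) ≤ 2 for every element u), then P has Dushnik–Miller dimension at most 2 (i.e., P has a realizer consisting of at most 2 linear extensions). -/

import Mathlib

/-- A partial linear extension (ple) of a poset `α`: a set `dom` together with a
linear order `rel` on `dom` extending the restriction of the partial order to `dom`. -/
structure PLE (α : Type*) [PartialOrder α] where
  dom : Set α
  rel : α → α → Prop
  refl : ∀ x ∈ dom, rel x x
  antisymm : ∀ x ∈ dom, ∀ y ∈ dom, rel x y → rel y x → x = y
  trans : ∀ x ∈ dom, ∀ y ∈ dom, ∀ z ∈ dom, rel x y → rel y z → rel x z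
  total : ∀ x ∈ dom, ∀ y ∈ dom, rel x y ∨ rel y x
  extends_le : ∀ x ∈ dom, ∀ y ∈ dom, x ≤ y → rel x y

/-- `μ(u, 𝓛)`: the number of members of the family `𝓛` whose domain contains `u`. -/
noncomputable def mu {α : Type*} [PartialOrder α] {m : ℕ} (L : Fin m → PLE α) (u : α) : ℕ :=
  Set.ncard {i : Fin m | u ∈ (L i).dom}

/-- A family of ple's is a local realizer when every strict comparability is witnessed
and every incomparable pair is reversed by some member. -/
def IsLocalRealizer {α : Type*} [PartialOrder α] {m : ℕ} (L : Fin m → PLE α) : Prop :=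
  (∀ x y : α, x < y → ∃ i, x ∈ (L i).dom ∧ y ∈ (L i).dom ∧ (L i).rel x y) ∧
  (∀ x y : α, ¬ x ≤ y → ¬ y ≤ x → ∃ i, x ∈ (L i).dom ∧ y ∈ (L i).dom ∧ (L i).rel y x)

/-- The local dimension: the least positive `d` admitting a local realizer `𝓛`
with `μ(u,𝓛) ≤ d` for every `u`. -/
noncomputable def localDim (α : Type*) [PartialOrder α] : ℕ :=
  sInf {d : ℕ | 0 < d ∧ ∃ m : ℕ, ∃ L : Fin m → PLE α,
    IsLocalRealizer L ∧ ∀ u : α, mu L u ≤ d}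

/-- A linear extension of the poset `α`. -/
structure LinExt (α : Type*) [PartialOrder α] where
  rel : α → α → Prop
  refl : ∀ x, rel x x
  antisymm : ∀ x y, rel x y → rel y x → x = y
  trans : ∀ x y z, rel x y → rel y z → rel x z
  total : ∀ x y, rel x y ∨ rel y x
  extends_le : ∀ x y : α, x ≤ y → rel x y

/-- A (nonempty) family of linear extensions is a realizer when every incomparable
pair is reversed by some member. -/
def IsRealizer {α : Type*} [PartialOrder α] {m : ℕ} (R : Fin m → LinExt α) : Prop :=
  0 < m ∧ ∀ x y : α, ¬ x ≤ y → ¬ y ≤ x → ∃ i, (R i).rel y x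

/-- The Dushnik–Miller dimension. -/
noncomputable def dimDM (α : Type*) [PartialOrder α] : ℕ :=
  sInf {d : ℕ | 0 < d ∧ ∃ R : Fin d → LinExt α, IsRealizer R}

/-- Q relation: minimal-index common ple orders x below y. -/
def Qrel {α : Type*} [PartialOrder α] {m : ℕ} (L : Fin m → PLE α) (x y : α) : Prop :=
  ¬ x ≤ y ∧ ¬ y ≤ x ∧ ∃ i : Fin m, x ∈ (L i).dom ∧ y ∈ (L i).dom ∧ (L i).rel x y ∧
    ∀ k : Fin m, k < i → ¬ (x ∈ (L k).dom ∧ y ∈ (L k).dom)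

section Aux
variable {α : Type*} [PartialOrder α] {m : ℕ} {L : Fin m → PLE α}

lemma pair_lemma
    (hrev : ∀ x y : α, ¬ x ≤ y → ¬ y ≤ x → ∃ i, x ∈ (L i).dom ∧ y ∈ (L i).dom ∧ (L i).rel y x)
    (hmu : ∀ u : α, mu L u ≤ 2)
    (x y : α) (hxy : ¬ x ≤ y) (hyx : ¬ y ≤ x) :
    ∃ i j : Fin m, i ≠ j ∧ x ∈ (L i).dom ∧ y ∈ (L i).dom ∧ x ∈ (L j).dom ∧ y ∈ (L j).dom
      ∧ (L i).rel x y ∧ (L j).rel y x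
      ∧ (∀ k, x ∈ (L k).dom → k = i ∨ k = j)
      ∧ (∀ k, y ∈ (L k).dom → k = i ∨ k = j) := by
  have hne : x ≠ y := fun h => hxy (h ▸ le_refl x)
  obtain ⟨j, hxj, hyj, hj⟩ := hrev x y hxy hyx
  obtain ⟨i, hyi, hxi, hi⟩ := hrev y x hyx hxy
  have hij : i ≠ j := by
    rintro rfl
    exact hne ((L i).antisymm x hxi y hyi hi hj)
  have cov : ∀ u : α, u ∈ (L i).dom → u ∈ (L j).dom → ∀ k, u ∈ (L k).dom → k = i ∨ k = j := by
    intro u hui huj k hk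
    have hsub : ({i, j} : Set (Fin m)) ⊆ {k' : Fin m | u ∈ (L k').dom} := by
      rintro k' (rfl | rfl) <;> simpa
    have hcard : {k' : Fin m | u ∈ (L k').dom}.ncard ≤ ({i, j} : Set (Fin m)).ncard := by
      rw [Set.ncard_pair hij]; exact hmu u
    have heq := Set.eq_of_subset_of_ncard_le hsub hcard (Set.toFinite _)
    have hk' : k ∈ ({i, j} : Set (Fin m)) := by rw [heq]; exact hk
    simpa using hk'
  exact ⟨i, j, hij, hxi, hyi, hxj, hyj, hi, hj, cov x hxi hxj, cov y hyi hyj⟩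

lemma Qrel_asymm (x y : α) (h1 : Qrel L x y) (h2 : Qrel L y x) : False := by
  obtain ⟨nxy, nyx, i, hxi, hyi, rxy, min1⟩ := h1
  obtain ⟨-, -, i', hyi', hxi', ryx, min2⟩ := h2
  have hii : i = i' := by
    have h1 : ¬ i' < i := fun hk => min1 i' hk ⟨hxi', hyi'⟩
    have h2 : ¬ i < i' := fun hk => min2 i hk ⟨hyi, hxi⟩
    exact le_antisymm (not_lt.1 h1) (not_lt.1 h2)
  exact nxy (le_of_eq ((L i).antisymm x hxi y hyi rxy (hii ▸ ryx)))

lemma Qrel_total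
    (hrev : ∀ x y : α, ¬ x ≤ y → ¬ y ≤ x → ∃ i, x ∈ (L i).dom ∧ y ∈ (L i).dom ∧ (L i).rel y x)
    (x y : α) (hxy : ¬ x ≤ y) (hyx : ¬ y ≤ x) : Qrel L x y ∨ Qrel L y x := by
  obtain ⟨j, hxj, hyj, -⟩ := hrev x y hxy hyx
  obtain ⟨i, hiS, hmin⟩ := Set.exists_min_image
    {k : Fin m | x ∈ (L k).dom ∧ y ∈ (L k).dom} id (Set.toFinite _) ⟨j, hxj, hyj⟩
  have hminlt : ∀ k : Fin m, k < i → ¬ (x ∈ (L k).dom ∧ y ∈ (L k).dom) :=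
    fun k hk hkS => absurd (hmin k hkS) (not_le.2 hk)
  rcases (L i).total x hiS.1 y hiS.2 with h | h
  · exact Or.inl ⟨hxy, hyx, i, hiS.1, hiS.2, h, hminlt⟩
  · exact Or.inr ⟨hyx, hxy, i, hiS.2, hiS.1, h,
      fun k hk hkS => hminlt k hk ⟨hkS.2, hkS.1⟩⟩

lemma Qrel_trans
    (hrev : ∀ x y : α, ¬ x ≤ y → ¬ y ≤ x → ∃ i, x ∈ (L i).dom ∧ y ∈ (L i).dom ∧ (L i).rel y x)
    (hmu : ∀ u : α, mu L u ≤ 2)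
    (x y z : α) (h1 : Qrel L x y) (h2 : Qrel L y z) : Qrel L x z := by
  obtain ⟨nxy, nyx, i, hxi, hyi, rxy, min1⟩ := h1
  obtain ⟨nyz, nzy, i', hyi', hzi', ryz, min2⟩ := h2
  have hnexy : x ≠ y := fun h => nxy (h ▸ le_refl x)
  have hneyz : y ≠ z := fun h => nyz (h ▸ le_refl y)
  obtain ⟨a, b, hab, hxa, hya, hxb, hyb, rab, rba, covx, covy⟩ :=
    pair_lemma hrev hmu x y nxy nyx
  obtain ⟨a', b', hab', hya', hza', hyb', hzb', rab', rba', covy', covz'⟩ :=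
    pair_lemma hrev hmu y z nyz nzy
  -- i = a
  have hia : i = a := by
    rcases covx i hxi with h | h
    · exact h
    · exact absurd ((L i).antisymm x hxi y hyi rxy (h ▸ rba)) hnexy
  have hia' : i' = a' := by
    rcases covy' i' hyi' with h | h
    · exact h
    · exact absurd ((L i').antisymm y hyi' z hzi' ryz (h ▸ rba')) hneyz
  -- memberships across the two pairs
  have ha'mem : a' = a ∨ a' = b := covy a' hya'
  have hb'mem : b' = a ∨ b' = b := covy b' hyb'
  have hamem : a = a' ∨ a = b' := covy' a hya
  have hbmem : b = a' ∨ b = b' := covy' b hyb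
  have hxi' : x ∈ (L i').dom := by
    rcases ha'mem with h | h
    · rw [hia', h]; exact hxa
    · rw [hia', h]; exact hxb
  have hzi : z ∈ (L i).dom := by
    rcases hamem with h | h
    · rw [hia, h]; exact hza'
    · rw [hia, h]; exact hzb'
  have hii : i = i' := le_antisymm
    (not_lt.1 fun hk => min1 i' hk ⟨hxi', hyi'⟩)
    (not_lt.1 fun hk => min2 i hk ⟨hyi, hzi⟩)
  -- b = b'
  have hbb : b = b' := by
    rcases hbmem with h | h
    · exact absurd (by rw [← hia, hii, hia', ← h]) hab
    · exact h
  have hryz : (L i).rel y z := by rw [hii]; exact ryz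
  have rxz : (L i).rel x z := (L i).trans x hxi y hyi z hzi rxy hryz
  have hzb : z ∈ (L b).dom := by rw [hbb]; exact hzb'
  have rzb : (L b).rel z y := by rw [hbb]; exact rba'
  have rzx : (L b).rel z x := (L b).trans z hzb y hyb x hxb rzb rba
  have hnexz : x ≠ z := by
    rintro rfl
    exact hnexy ((L i).antisymm x hxi y hyi rxy hryz)
  have nxz : ¬ x ≤ z := by
    intro hle
    exact hnexz ((L b).antisymm x hxb z hzb ((L b).extends_le x hxb z hzb hle) rzx)
  have nzx : ¬ z ≤ x := by
    intro hle
    exact hnexz ((L i).antisymm x hxi z hzi rxz ((L i).extends_le z hzi x hxi hle))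
  refine ⟨nxz, nzx, i, hxi, hzi, rxz, ?_⟩
  intro k hk ⟨hxk, hzk⟩
  rcases covx k hxk with h | h
  · exact absurd hk (by rw [h, ← hia]; exact lt_irrefl i)
  · exact min1 k hk ⟨hxk, by rw [h]; exact hyb⟩

/-- Abstract: a strict order orienting exactly the incomparabilities gives a partial order. -/
lemma aux_po (q : α → α → Prop)
    (hasym : ∀ x y, q x y → q y x → False)
    (htrans : ∀ x y z, q x y → q y z → q x z)
    (hinc : ∀ x y, q x y → ¬ x ≤ y ∧ ¬ y ≤ x)
    (htot : ∀ x y, ¬ x ≤ y → ¬ y ≤ x → q x y ∨ q y x) :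
    IsPartialOrder α (fun x y => x ≤ y ∨ q x y) where
  refl x := Or.inl le_rfl
  trans := by
    rintro x y z (hxy | hxy) (hyz | hyz)
    · exact Or.inl (le_trans hxy hyz)
    · -- x ≤ y, q y z
      by_cases hxz : x ≤ z
      · exact Or.inl hxz
      rcases eq_or_lt_of_le hxy with rfl | hlt
      · exact Or.inr hyz
      have nzx : ¬ z ≤ x := fun hzx => (hinc y z hyz).2 (le_trans hzx hxy)
      rcases htot x z hxz nzx with h | h
      · exact Or.inr h
      · exact absurd hxy (hinc y x (htrans y z x hyz h)).2
    · -- q x y, y ≤ z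
      by_cases hxz : x ≤ z
      · exact Or.inl hxz
      have nzx : ¬ z ≤ x := fun hzx => (hinc x y hxy).2 (le_trans hyz hzx)
      rcases htot x z hxz nzx with h | h
      · exact Or.inr h
      · exact absurd hyz (hinc z y (htrans z x y h hxy)).2
    · exact Or.inr (htrans x y z hxy hyz)
  antisymm := by
    rintro x y (hxy | hxy) (hyx | hyx)
    · exact le_antisymm hxy hyx
    · exact absurd hxy (hinc y x hyx).2
    · exact absurd hyx (hinc x y hxy).2
    · exact (hasym x y hxy hyx).elim

lemma aux_linext (q : α → α → Prop)
    (hasym : ∀ x y, q x y → q y x → False)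
    (htrans : ∀ x y z, q x y → q y z → q x z)
    (hinc : ∀ x y, q x y → ¬ x ≤ y ∧ ¬ y ≤ x)
    (htot : ∀ x y, ¬ x ≤ y → ¬ y ≤ x → q x y ∨ q y x) :
    ∃ E : LinExt α, ∀ x y, q x y → E.rel x y := by
  haveI := aux_po q hasym htrans hinc htot
  obtain ⟨s, hs, hsub⟩ := extend_partialOrder (fun x y => x ≤ y ∨ q x y)
  haveI := hs
  have hsub' : ∀ x y, (x ≤ y ∨ q x y) → s x y := fun x y h => hsub x y h
  exact ⟨⟨s, fun x => refl_of s x, fun x y h1 h2 => antisymm h1 h2,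
    fun x y z h1 h2 => IsTrans.trans x y z h1 h2, fun x y => total_of s x y,
    fun x y h => hsub' x y (Or.inl h)⟩, fun x y h => hsub' x y (Or.inr h)⟩

end Aux

/-- A poset with a local realizer of width at most `2` has a realizer of size `2`. -/
theorem dim_le_two_of_localDim_le_two (α : Type*) [Fintype α] [PartialOrder α]
    (h : ∃ (m : ℕ) (L : Fin m → PLE α), IsLocalRealizer L ∧ ∀ u : α, mu L u ≤ 2) :
    ∃ R : Fin 2 → LinExt α, IsRealizer R := by
  obtain ⟨m, L, ⟨hcov, hrev⟩, hmu⟩ := h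
  obtain ⟨E1, hE1⟩ := aux_linext (Qrel L) Qrel_asymm (Qrel_trans hrev hmu)
    (fun x y h => ⟨h.1, h.2.1⟩) (Qrel_total hrev)
  obtain ⟨E2, hE2⟩ := aux_linext (fun x y => Qrel L y x)
    (fun x y h1 h2 => Qrel_asymm y x h1 h2)
    (fun x y z h1 h2 => Qrel_trans hrev hmu z y x h2 h1)
    (fun x y h => ⟨h.2.1, h.1⟩)
    (fun x y hxy hyx => (Qrel_total hrev x y hxy hyx).symm)
  refine ⟨![E1, E2], two_pos, ?_⟩
  intro x y hxy hyx
  rcases Qrel_total hrev x y hxy hyx with h | h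
  · exact ⟨1, hE2 y x h⟩
  · exact ⟨0, hE1 y x h⟩
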